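/- Let 0 < n < L, let 1 ≤ i ≤ n, and let 0 ≤ j ≤ L − n. Then E_1(L,n;i;j) = Σ_{k=j}^{L−n} c_{j,k} · Z^{α,β}(L−k, n). -/

import Mathlib

open scoped BigOperators Classical
open Filter Topology

noncomputable section

namespace TASEP

/-- The matrix `X₀`: ones on the diagonal and the subdiagonal. -/
def X0 : ℕ → ℕ → ℝ := fun i k => if k = i ∨ k + 1 = i then 1 else 0

/-- The matrix `X₁`: ones on the diagonal and the superdiagonal. -/
def X1 : ℕ → ℕ → ℝ := fun i k => if k = i ∨ k = i + 1 then 1 else 0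

/-- The matrix `X₂`: a single one in the `(0,0)` entry. -/
def X2 : ℕ → ℕ → ℝ := fun i k => if i = 0 ∧ k = 0 then 1 else 0

/-- The matrix associated to a species label (`0` = hole, `1` = first class
particle, `2` = second class particle). -/
def Xmat : Fin 3 → ℕ → ℕ → ℝ
  | 0 => X0
  | 1 => X1
  | 2 => X2

/-- Product of two infinite matrices (well defined here since the relevant
matrices have finitely many nonzero entries in each row and column). -/
def mul (A B : ℕ → ℕ → ℝ) : ℕ → ℕ → ℝ := fun i k => ∑' j, A i j * B j k

/-- The row vector `⟨W_α|`, with `i`-th entry `((1-α)/α)^i`. -/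
def W (α : ℝ) : ℕ → ℝ := fun i => ((1 - α) / α) ^ i

/-- The column vector `|V_β⟩`, with `i`-th entry `((1-β)/β)^i`. -/
def V (β : ℝ) : ℕ → ℝ := fun i => ((1 - β) / β) ^ i

/-- Row vector times matrix. -/
def rowMul (v : ℕ → ℝ) (A : ℕ → ℕ → ℝ) : ℕ → ℝ := fun k => ∑' i, v i * A i k

/-- Matrix times column vector. -/
def colMul (A : ℕ → ℕ → ℝ) (v : ℕ → ℝ) : ℕ → ℝ := fun i => ∑' k, A i k * v k

/-- Row vector times a word of matrices. -/
def rowWord (v : ℕ → ℝ) : List (Fin 3) → ℕ → ℝ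
  | [] => v
  | a :: rest => rowWord (rowMul v (Xmat a)) rest

/-- Matrix element `⟨v| X_{σ₁} ⋯ X_{σ_p} |w⟩` of a word of matrices. -/
def pairing (v : ℕ → ℝ) (word : List (Fin 3)) (w : ℕ → ℝ) : ℝ :=
  ∑' i, rowWord v word i * w i

/-- Weight `w^{α,β}(τ) = ⟨W_α| X_{τ₁} ⋯ X_{τ_L} |V_β⟩` of a configuration. -/
def wt (α β : ℝ) {L : ℕ} (τ : Fin L → Fin 3) : ℝ :=
  pairing (W α) (List.ofFn τ) (V β)

/-- Number of second class particles in a configuration. -/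
def numTwos {L : ℕ} (τ : Fin L → Fin 3) : ℕ :=
  (Finset.univ.filter fun i => τ i = 2).card

/-- `Y L n`: configurations of length `L` with exactly `n` second class particles. -/
def Y (L n : ℕ) : Finset (Fin L → Fin 3) :=
  Finset.univ.filter fun τ => numTwos τ = n

/-- The partition function `Z^{α,β}(L,n)`. -/
def Z (α β : ℝ) (L n : ℕ) : ℝ := ∑ τ ∈ Y L n, wt α β τ

/-- Value of a configuration at the 1-based site `s` (defaulting to `0` off the lattice). -/
def val {L : ℕ} (τ : Fin L → Fin 3) (s : ℕ) : Fin 3 :=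
  if h : 1 ≤ s ∧ s ≤ L then τ ⟨s - 1, by omega⟩ else 0

/-- `E α β L n r sites j` is `E_r(L,n;i₁,…,i_r;j)`: the sum of weights of
configurations in `Y L n` with a first class particle at each of the sites
`i₁,…,i_{r-1}` and a block of `j` consecutive first class particles starting
at site `i_r`. -/
def E (α β : ℝ) (L n r : ℕ) (sites : Fin r → ℕ) (j : ℕ) : ℝ :=
  ∑ τ ∈ (Y L n).filter (fun τ =>
      (∀ m : Fin r, (m : ℕ) + 1 ≠ r → val τ (sites m) = 1) ∧
      (∀ m : Fin r, (m : ℕ) + 1 = r → ∀ t ∈ Finset.range j, val τ (sites m + t) = 1)),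
    wt α β τ

end TASEP

namespace TASEP

/-- The Catalan triangle numbers `C^m_n = binom(m+n,n)·(m−n+1)/(m+1)`. -/
def catC (m n : ℕ) : ℝ := ((m + n).choose n : ℝ) * ((m : ℝ) - (n : ℝ) + 1) / ((m : ℝ) + 1)

/-- The constants `c_{j,k}`: `c_{j,k} = C^{k−1}_{k−j}` for `j ≥ 1` and
`c_{0,k} = δ_{k,0}`. -/
def cCoeff (j k : ℕ) : ℝ :=
  if j = 0 then (if k = 0 then 1 else 0) else catC (k - 1) (k - j)

/-- The constants `d_{m,j,k}`: for `j ≤ m`,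
`d_{m,j,k} = binom(m−j+k,k) − binom(m−j+k,k−j)` (the second binomial taken to
be `0` when `k < j`), and `d_{m,m+1,k} = δ_{k,0}`. -/
def dCoeff (m j k : ℕ) : ℝ :=
  if j ≤ m then
    ((m - j + k).choose k : ℝ) - (if j ≤ k then ((m - j + k).choose (k - j) : ℝ) else 0)
  else if k = 0 then 1 else 0

end TASEP


namespace TASEP

variable {α β : ℝ}

lemma rowMul_X0 (v : ℕ → ℝ) : rowMul v X0 = fun k => v k + v (k + 1) := by
  funext k
  have h : ∀ i ∉ ({k, k + 1} : Finset ℕ), v i * X0 i k = 0 := by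
    intro i hi
    simp only [Finset.mem_insert, Finset.mem_singleton] at hi
    push_neg at hi
    simp [X0, hi.1, hi.2]
    intro h; omega
  rw [rowMul, tsum_eq_sum h, Finset.sum_pair (by omega : k ≠ k + 1)]
  simp [X0]

lemma rowMul_X1 (v : ℕ → ℝ) :
    rowMul v X1 = fun k => v k + if k = 0 then 0 else v (k - 1) := by
  funext k
  rcases Nat.eq_zero_or_pos k with hk | hk
  · subst hk
    have h : ∀ i ∉ ({0} : Finset ℕ), v i * X1 i 0 = 0 := by
      intro i hi
      simp only [Finset.mem_singleton] at hi
      simp [X1]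
      intro h; omega
    rw [rowMul, tsum_eq_sum h]
    simp [X1]
  · have h : ∀ i ∉ ({k, k - 1} : Finset ℕ), v i * X1 i k = 0 := by
      intro i hi
      simp only [Finset.mem_insert, Finset.mem_singleton] at hi
      push_neg at hi
      simp [X1, hi.1]
      intro h; omega
    rw [rowMul, tsum_eq_sum h, Finset.sum_pair (by omega : k ≠ k - 1)]
    have h1 : X1 k k = 1 := by simp [X1]
    have h2 : X1 (k - 1) k = 1 := by simp [X1]; omega
    rw [h1, h2, if_neg (by omega)]
    ring

lemma rowMul_X2 (v : ℕ → ℝ) : rowMul v X2 = fun k => if k = 0 then v 0 else 0 := by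
  funext k
  rcases Nat.eq_zero_or_pos k with hk | hk
  · subst hk
    have h : ∀ i ∉ ({0} : Finset ℕ), v i * X2 i 0 = 0 := by
      intro i hi
      simp only [Finset.mem_singleton] at hi
      simp [X2, hi]
    rw [rowMul, tsum_eq_sum h]
    simp [X2]
  · have h : ∀ i ∉ (∅ : Finset ℕ), v i * X2 i k = 0 := by
      intro i _
      simp [X2]
      intro h; omega
    rw [rowMul, tsum_eq_sum h]
    simp [if_neg (by omega : ¬ k = 0)]

lemma rowMul_add (v w : ℕ → ℝ) (a : Fin 3) :
    rowMul (v + w) (Xmat a) = rowMul v (Xmat a) + rowMul w (Xmat a) := by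
  fin_cases a <;>
    · show rowMul _ _ = _
      funext k
      simp only [Xmat, rowMul_X0, rowMul_X1, rowMul_X2, Pi.add_apply]
      first | (split_ifs <;> ring) | ring

lemma rowWord_append (v : ℕ → ℝ) (l1 l2 : List (Fin 3)) :
    rowWord v (l1 ++ l2) = rowWord (rowWord v l1) l2 := by
  induction l1 generalizing v with
  | nil => rfl
  | cons a l ih => simp only [List.cons_append, rowWord]; exact ih _

lemma rowWord_add (l : List (Fin 3)) (v w : ℕ → ℝ) :
    rowWord (v + w) l = rowWord v l + rowWord w l := by
  induction l generalizing v w with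
  | nil => rfl
  | cons a l ih => simp only [rowWord, rowMul_add, ih]

/-- finitely supported predicate -/
def FinSupp (v : ℕ → ℝ) : Prop := ∃ N, ∀ k, N ≤ k → v k = 0

lemma finSupp_rowMul {v : ℕ → ℝ} (hv : FinSupp v) (a : Fin 3) :
    FinSupp (rowMul v (Xmat a)) := by
  obtain ⟨N, hN⟩ := hv
  fin_cases a
  · exact ⟨N, fun k hk => by
      show rowMul v X0 k = 0
      rw [rowMul_X0]; simp [hN k hk, hN (k+1) (by omega)]⟩
  · exact ⟨N + 1, fun k hk => by
      show rowMul v X1 k = 0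
      rw [rowMul_X1]
      simp [hN k (by omega), if_neg (by omega : ¬ k = 0), hN (k-1) (by omega)]⟩
  · exact ⟨N + 1, fun k hk => by
      show rowMul v X2 k = 0
      rw [rowMul_X2]; simp [if_neg (by omega : ¬ k = 0)]⟩

lemma finSupp_rowMul_X2 (v : ℕ → ℝ) : FinSupp (rowMul v X2) := by
  refine ⟨1, fun k hk => ?_⟩
  rw [rowMul_X2]
  simp [if_neg (by omega : ¬ k = 0)]

lemma finSupp_rowWord {v : ℕ → ℝ} (hv : FinSupp v) (l : List (Fin 3)) :
    FinSupp (rowWord v l) := by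
  induction l generalizing v with
  | nil => exact hv
  | cons a l ih => exact ih (finSupp_rowMul hv a)

lemma finSupp_rowWord_of_mem {v : ℕ → ℝ} {l : List (Fin 3)} (h : (2 : Fin 3) ∈ l) :
    FinSupp (rowWord v l) := by
  induction l generalizing v with
  | nil => simp at h
  | cons a l ih =>
    rcases List.mem_cons.mp h with h | h
    · subst h
      exact finSupp_rowWord (finSupp_rowMul_X2 v) l
    · exact ih h

lemma summable_finSupp {u : ℕ → ℝ} (hu : FinSupp u) (w : ℕ → ℝ) :
    Summable (fun i => u i * w i) := by
  obtain ⟨N, hN⟩ := hu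
  apply summable_of_ne_finset_zero (s := Finset.range N)
  intro i hi
  rw [Finset.mem_range, not_lt] at hi
  simp [hN i hi]

lemma pairing_add {l : List (Fin 3)} (h : (2 : Fin 3) ∈ l) (v w u : ℕ → ℝ) :
    pairing (v + w) l u = pairing v l u + pairing w l u := by
  unfold pairing
  rw [rowWord_add]
  have h1 := summable_finSupp (finSupp_rowWord_of_mem (v := v) h) u
  have h2 := summable_finSupp (finSupp_rowWord_of_mem (v := w) h) u
  rw [← Summable.tsum_add h1 h2]
  congr 1
  funext i
  simp [Pi.add_apply]
  ring

end TASEP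

namespace TASEP

lemma vec_X1_X0 (u : ℕ → ℝ) :
    rowMul (rowMul u X1) X0 = rowMul u X1 + rowMul u X0 := by
  funext k
  simp only [rowMul_X0, rowMul_X1, Pi.add_apply]
  rcases Nat.eq_zero_or_pos k with hk | hk
  · subst hk; simp; ring
  · rw [if_neg (by omega : ¬ k = 0), if_neg (by omega : ¬ k + 1 = 0)]
    simp only [Nat.add_sub_cancel]
    ring

lemma vec_X1_X2 (u : ℕ → ℝ) : rowMul (rowMul u X1) X2 = rowMul u X2 := by
  funext k
  simp only [rowMul_X2, rowMul_X1]
  rcases Nat.eq_zero_or_pos k with hk | hk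
  · subst hk; simp
  · rw [if_neg (by omega : ¬ k = 0), if_neg (by omega : ¬ k = 0)]

/-- `Phi v β L n`: partition-like sum with general left vector. -/
def Phi (v : ℕ → ℝ) (β : ℝ) (L n : ℕ) : ℝ :=
  ∑ τ ∈ Y L n, pairing v (List.ofFn τ) (V β)

/-- `Efn v β L n s j`: sum over `Y L n` with ones at 0-based positions
`s, s+1, …, s+j-1`, with general left vector. -/
def Efn (v : ℕ → ℝ) (β : ℝ) (L n s j : ℕ) : ℝ :=
  ∑ τ ∈ (Y L n).filter
      (fun τ => ∀ t, t < j → ∀ h : s + t < L, τ ⟨s + t, h⟩ = 1),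
    pairing v (List.ofFn τ) (V β)

lemma Efn_zero (v : ℕ → ℝ) (β : ℝ) (L n s : ℕ) :
    Efn v β L n s 0 = Phi v β L n := by
  unfold Efn Phi
  rw [Finset.filter_true_of_mem]
  intro τ _ t ht
  omega

lemma sum_cons {L : ℕ} (F : (Fin (L + 1) → Fin 3) → ℝ) :
    ∑ τ : Fin (L + 1) → Fin 3, F τ
      = ∑ a : Fin 3, ∑ σ : Fin L → Fin 3, F (Fin.cons a σ) := by
  exact ((Fintype.sum_equiv (Fin.consEquiv (fun _ => Fin 3))
    (fun p => F (Fin.cons p.1 p.2)) F (fun p => rfl)).symm).trans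
    (Fintype.sum_prod_type (f := fun p => F (Fin.cons p.1 p.2)))

lemma numTwos_cons {L : ℕ} (a : Fin 3) (σ : Fin L → Fin 3) :
    numTwos (Fin.cons a σ) = (if a = 2 then 1 else 0) + numTwos σ := by
  unfold numTwos
  rw [Finset.card_filter, Finset.card_filter, Fin.sum_univ_succ]
  simp [Fin.cons_zero, Fin.cons_succ]

lemma pairing_cons {L : ℕ} (v : ℕ → ℝ) (a : Fin 3) (σ : Fin L → Fin 3) (w : ℕ → ℝ) :
    pairing v (List.ofFn (Fin.cons a σ)) w
      = pairing (rowMul v (Xmat a)) (List.ofFn σ) w := by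
  have h : List.ofFn (Fin.cons a σ) = a :: List.ofFn σ := by
    simp [List.ofFn_succ]
  rw [h]
  rfl

end TASEP

namespace TASEP

lemma mem_ofFn_two {L n : ℕ} {τ : Fin L → Fin 3} (hτ : τ ∈ Y L n) (hn : 1 ≤ n) :
    (2 : Fin 3) ∈ List.ofFn τ := by
  rw [Y, Finset.mem_filter] at hτ
  have hc : 0 < (Finset.univ.filter fun i => τ i = 2).card := by
    rw [numTwos] at hτ; omega
  obtain ⟨t, ht⟩ := Finset.card_pos.mp hc
  rw [Finset.mem_filter] at ht
  exact (List.mem_ofFn).mpr ⟨t, ht.2⟩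

lemma Phi_add {β : ℝ} {L n : ℕ} (hn : 1 ≤ n) (v w : ℕ → ℝ) :
    Phi (v + w) β L n = Phi v β L n + Phi w β L n := by
  unfold Phi
  rw [← Finset.sum_add_distrib]
  refine Finset.sum_congr rfl fun τ hτ => ?_
  exact pairing_add (mem_ofFn_two hτ hn) v w _

lemma Phi_peel (v : ℕ → ℝ) (β : ℝ) (L n : ℕ) (hn : 1 ≤ n) :
    Phi v β (L + 1) n
      = Phi (rowMul v X0) β L n + Phi (rowMul v X1) β L n
        + Phi (rowMul v X2) β L (n - 1) := by
  unfold Phi Y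
  rw [Finset.sum_filter, Finset.sum_filter, Finset.sum_filter, Finset.sum_filter]
  rw [sum_cons (fun τ => if numTwos τ = n then pairing v (List.ofFn τ) (V β) else 0)]
  rw [Fin.sum_univ_three]
  congr 1
  congr 1
  · refine Finset.sum_congr rfl fun σ _ => ?_
    rw [numTwos_cons, pairing_cons]
    rw [if_neg (by decide : ¬ (0 : Fin 3) = 2)]
    exact if_congr (by omega) rfl rfl
  · refine Finset.sum_congr rfl fun σ _ => ?_
    rw [numTwos_cons, pairing_cons]
    rw [if_neg (by decide : ¬ (1 : Fin 3) = 2)]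
    exact if_congr (by omega) rfl rfl
  · refine Finset.sum_congr rfl fun σ _ => ?_
    rw [numTwos_cons, pairing_cons]
    rw [if_pos (by decide : (2 : Fin 3) = 2)]
    exact if_congr (by omega) rfl rfl

lemma index_succ {L s t : ℕ} (h' : s + 1 + t < L + 1) (h : s + t < L) :
    (⟨s + 1 + t, h'⟩ : Fin (L + 1)) = Fin.succ ⟨s + t, h⟩ := by
  apply Fin.ext
  simp only [Fin.val_succ]
  omega

lemma cons_block_iff {L s j : ℕ} (a : Fin 3) (σ : Fin L → Fin 3) :
    (∀ t, t < j → ∀ h : s + 1 + t < L + 1, (Fin.cons a σ : Fin (L+1) → Fin 3) ⟨s + 1 + t, h⟩ = 1)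
      ↔ (∀ t, t < j → ∀ h : s + t < L, σ ⟨s + t, h⟩ = 1) := by
  constructor
  · intro H t ht h
    have h' : s + 1 + t < L + 1 := by omega
    have := H t ht h'
    rwa [index_succ h' h, Fin.cons_succ] at this
  · intro H t ht h'
    have h : s + t < L := by omega
    rw [index_succ h' h, Fin.cons_succ]
    exact H t ht h

lemma Efn_peel (v : ℕ → ℝ) (β : ℝ) (L n s j : ℕ) (hn : 1 ≤ n) :
    Efn v β (L + 1) n (s + 1) j
      = Efn (rowMul v X0) β L n s j + Efn (rowMul v X1) β L n s j
        + Efn (rowMul v X2) β L (n - 1) s j := by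
  unfold Efn Y
  simp only [Finset.filter_filter]
  rw [Finset.sum_filter, Finset.sum_filter, Finset.sum_filter, Finset.sum_filter]
  rw [sum_cons (fun τ => if (numTwos τ = n ∧ ∀ t, t < j → ∀ h : s + 1 + t < L + 1,
    τ ⟨s + 1 + t, h⟩ = 1) then pairing v (List.ofFn τ) (V β) else 0)]
  rw [Fin.sum_univ_three]
  congr 1
  congr 1
  · refine Finset.sum_congr rfl fun σ _ => ?_
    rw [numTwos_cons, pairing_cons]
    rw [if_neg (by decide : ¬ (0 : Fin 3) = 2)]
    exact if_congr (and_congr (by omega) (cons_block_iff _ _)) rfl rfl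
  · refine Finset.sum_congr rfl fun σ _ => ?_
    rw [numTwos_cons, pairing_cons]
    rw [if_neg (by decide : ¬ (1 : Fin 3) = 2)]
    exact if_congr (and_congr (by omega) (cons_block_iff _ _)) rfl rfl
  · refine Finset.sum_congr rfl fun σ _ => ?_
    rw [numTwos_cons, pairing_cons]
    rw [if_pos (by decide : (2 : Fin 3) = 2)]
    exact if_congr (and_congr (by omega) (cons_block_iff _ _)) rfl rfl

lemma index_zero {L : ℕ} (h : 0 + 0 < L + 1) : (⟨0 + 0, h⟩ : Fin (L + 1)) = 0 := by
  apply Fin.ext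
  simp

lemma cons_front_block_iff {L j : ℕ} (hj : 1 ≤ j) (σ : Fin L → Fin 3) :
    (∀ t, t < j → ∀ h : 0 + t < L + 1, (Fin.cons 1 σ : Fin (L+1) → Fin 3) ⟨0 + t, h⟩ = 1)
      ↔ (∀ t, t < j - 1 → ∀ h : 0 + t < L, σ ⟨0 + t, h⟩ = 1) := by
  constructor
  · intro H t ht h
    have h' : 0 + (t + 1) < L + 1 := by omega
    have := H (t + 1) (by omega) h'
    have hidx : (⟨0 + (t + 1), h'⟩ : Fin (L + 1)) = Fin.succ ⟨0 + t, h⟩ := by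
      apply Fin.ext
      simp only [Fin.val_succ]
      omega
    rwa [hidx, Fin.cons_succ] at this
  · intro H t ht h'
    rcases Nat.eq_zero_or_pos t with ht0 | ht0
    · subst ht0
      rw [index_zero h', Fin.cons_zero]
    · have h : 0 + (t - 1) < L := by omega
      have hidx : (⟨0 + t, h'⟩ : Fin (L + 1)) = Fin.succ ⟨0 + (t - 1), h⟩ := by
        apply Fin.ext
        simp only [Fin.val_succ]
        omega
      rw [hidx, Fin.cons_succ]
      exact H (t - 1) (by omega) h

lemma Efn_peelOne (v : ℕ → ℝ) (β : ℝ) (L n j : ℕ) (hj : 1 ≤ j) :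
    Efn v β (L + 1) n 0 j = Efn (rowMul v X1) β L n 0 (j - 1) := by
  unfold Efn Y
  simp only [Finset.filter_filter]
  rw [Finset.sum_filter, Finset.sum_filter]
  rw [sum_cons (fun τ => if (numTwos τ = n ∧ ∀ t, t < j → ∀ h : 0 + t < L + 1,
    τ ⟨0 + t, h⟩ = 1) then pairing v (List.ofFn τ) (V β) else 0)]
  rw [Fin.sum_univ_three]
  have hzero : ∀ (a : Fin 3) (σ : Fin L → Fin 3), a ≠ 1 →
      (if (numTwos (Fin.cons a σ) = n ∧ ∀ t, t < j → ∀ h : 0 + t < L + 1,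
        (Fin.cons a σ : Fin (L+1) → Fin 3) ⟨0 + t, h⟩ = 1) then
          pairing v (List.ofFn (Fin.cons a σ)) (V β) else 0) = 0 := by
    intro a σ ha
    rw [if_neg]
    rintro ⟨-, hP⟩
    have h' : 0 + 0 < L + 1 := by omega
    have := hP 0 hj h'
    rw [index_zero h', Fin.cons_zero] at this
    exact ha this
  rw [Finset.sum_eq_zero (fun σ _ => hzero 0 σ (by decide)),
    Finset.sum_eq_zero (fun σ _ => hzero 2 σ (by decide))]
  have hone : ∀ σ : Fin L → Fin 3,
      (if (numTwos (Fin.cons 1 σ) = n ∧ ∀ t, t < j → ∀ h : 0 + t < L + 1,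
        (Fin.cons 1 σ : Fin (L+1) → Fin 3) ⟨0 + t, h⟩ = 1) then
          pairing v (List.ofFn (Fin.cons 1 σ)) (V β) else 0)
      = (if (numTwos σ = n ∧ ∀ t, t < j - 1 → ∀ h : 0 + t < L,
          σ ⟨0 + t, h⟩ = 1) then
            pairing (rowMul v X1) (List.ofFn σ) (V β) else 0) := by
    intro σ
    rw [numTwos_cons, pairing_cons]
    rw [if_neg (by decide : ¬ (1 : Fin 3) = 2)]
    exact if_congr (and_congr (by omega) (cons_front_block_iff hj σ)) rfl rfl
  rw [Finset.sum_congr rfl (fun σ _ => hone σ)]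
  ring

lemma Efn_replicate (v : ℕ → ℝ) (β : ℝ) (n : ℕ) :
    ∀ j L, j ≤ L →
      Efn v β L n 0 j = Phi (rowWord v (List.replicate j 1)) β (L - j) n := by
  intro j
  induction j generalizing v with
  | zero => intro L _; simpa [List.replicate, rowWord] using Efn_zero v β L n 0
  | succ j ih =>
    intro L hL
    obtain ⟨L', rfl⟩ : ∃ L', L = L' + 1 := ⟨L - 1, by omega⟩
    rw [Efn_peelOne v β L' n (j + 1) (by omega)]
    simp only [Nat.add_sub_cancel]
    rw [ih (rowMul v X1) L' (by omega)]
    rw [List.replicate_succ]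
    simp only [Nat.succ_sub_succ]
    rfl

lemma keyLemma (u : ℕ → ℝ) (β : ℝ) (L n : ℕ) (hn : 1 ≤ n) :
    Phi (rowMul u X1) β (L + 1) n
      = Phi (rowMul (rowMul u X1) X1) β L n + Phi u β (L + 1) n := by
  rw [Phi_peel (rowMul u X1) β L n hn, Phi_peel u β L n hn]
  rw [vec_X1_X0, vec_X1_X2, Phi_add hn]
  ring

end TASEP

namespace TASEP

lemma midLemma (β : ℝ) :
    ∀ s : ℕ, ∀ (v : ℕ → ℝ) (L n j : ℕ), 1 ≤ j → s < n → s + j < L →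
      Efn v β L n s j = Efn v β L n s (j + 1) + Efn v β (L - 1) n s (j - 1) := by
  intro s
  induction s with
  | zero =>
    intro v L n j hj hn hL
    have hn1 : 1 ≤ n := hn
    have hrep : List.replicate j (1 : Fin 3) = List.replicate (j - 1) 1 ++ [1] := by
      conv_lhs => rw [show j = (j - 1) + 1 by omega]
      exact (List.replicate_succ' : List.replicate ((j - 1) + 1) (1 : Fin 3) = _)
    have h1 : rowWord v (List.replicate j 1)
        = rowMul (rowWord v (List.replicate (j - 1) 1)) X1 := by
      rw [hrep, rowWord_append]; rfl
    have h2 : rowWord v (List.replicate (j + 1) 1)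
        = rowMul (rowMul (rowWord v (List.replicate (j - 1) 1)) X1) X1 := by
      rw [(List.replicate_succ' : List.replicate (j + 1) (1 : Fin 3) = _), rowWord_append, h1]; rfl
    rw [Efn_replicate v β n j L (by omega : j ≤ L),
      Efn_replicate v β n (j + 1) L (by omega : j + 1 ≤ L),
      Efn_replicate v β n (j - 1) (L - 1) (by omega : j - 1 ≤ L - 1), h1, h2]
    have e1 : L - j = (L - j - 1) + 1 := by omega
    have e2 : L - (j + 1) = L - j - 1 := by omega
    have e3 : L - 1 - (j - 1) = (L - j - 1) + 1 := by omega
    rw [e1, e2, e3]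
    exact keyLemma (rowWord v (List.replicate (j - 1) 1)) β (L - j - 1) n hn1
  | succ s ih =>
    intro v L n j hj hn hL
    obtain ⟨M, rfl⟩ : ∃ M, L = M + 1 := ⟨L - 1, by omega⟩
    have hM : s + j < M := by omega
    have hn1 : 1 ≤ n := by omega
    rw [Efn_peel v β M n s j hn1]
    rw [ih (rowMul v X0) M n j hj (by omega) hM,
      ih (rowMul v X1) M n j hj (by omega) hM,
      ih (rowMul v X2) M (n - 1) j hj (by omega) hM]
    rw [Efn_peel v β M n s (j + 1) hn1]
    obtain ⟨K, rfl⟩ : ∃ K, M = K + 1 := ⟨M - 1, by omega⟩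
    rw [show (K + 1 + 1 - 1) = K + 1 from rfl]
    rw [Efn_peel v β K n s (j - 1) hn1]
    simp only [Nat.add_sub_cancel]
    ring

end TASEP

namespace TASEP

lemma catC_zero (m : ℕ) : catC m 0 = 1 := by
  have hm : ((m : ℝ) + 1) ≠ 0 := by positivity
  simp [catC, hm]

lemma catC_top (m : ℕ) : catC m (m + 1) = 0 := by
  unfold catC
  have h : ((m : ℝ) - ((m + 1 : ℕ) : ℝ) + 1) = 0 := by push_cast; ring
  rw [h, mul_zero, zero_div]

lemma catC_eq {m n : ℕ} (h1 : 1 ≤ n) (h2 : n ≤ m + 1) :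
    catC m n = (((m + n).choose n : ℕ) : ℝ) - (((m + n).choose (n - 1) : ℕ) : ℝ) := by
  have key : (((m + n).choose n : ℕ) : ℝ) * n
      = (((m + n).choose (n - 1) : ℕ) : ℝ) * ((m : ℝ) + 1) := by
    have h := Nat.choose_succ_right_eq (m + n) (n - 1)
    rw [show n - 1 + 1 = n by omega, show m + n - (n - 1) = m + 1 by omega] at h
    have h' := congrArg (fun x : ℕ => (x : ℝ)) h
    push_cast at h'
    linarith [h']
  have hm : ((m : ℝ) + 1) ≠ 0 := by positivity
  rw [catC, div_eq_iff hm]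
  linear_combination -key

lemma catC_rec {m n : ℕ} (h1 : 1 ≤ n) (h2 : n ≤ m) :
    catC m n = catC m (n - 1) + catC (m - 1) n := by
  rcases eq_or_lt_of_le h1 with h | h
  · -- n = 1
    have hn : n = 1 := h.symm
    subst hn
    rw [catC_eq (le_refl 1) (by omega), catC_zero,
      catC_eq (le_refl 1) (by omega : 1 ≤ (m - 1) + 1)]
    simp only [Nat.choose_one_right, Nat.sub_self, Nat.choose_zero_right]
    rw [show m - 1 + 1 = m by omega]
    push_cast
    ring
  · -- n ≥ 2
    obtain ⟨a, rfl⟩ : ∃ a, n = a + 2 := ⟨n - 2, by omega⟩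
    obtain ⟨b, rfl⟩ : ∃ b, m = b + (a + 2) := ⟨m - (a + 2), by omega⟩
    rw [catC_eq (by omega) (by omega), catC_eq (by omega) (by omega),
      catC_eq (by omega) (by omega)]
    rw [show (a + 2 : ℕ) - 1 = a + 1 from rfl]
    rw [show b + (a + 2) - 1 = b + (a + 1) from rfl]
    rw [show (a + 1 : ℕ) - 1 = a from rfl]
    rw [show b + (a + 2) + (a + 2) = (b + 2 * a + 3) + 1 by omega,
      show b + (a + 2) + (a + 1) = b + 2 * a + 3 by omega,
      show b + (a + 1) + (a + 2) = b + 2 * a + 3 by omega]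
    rw [show (a + 2 : ℕ) = (a + 1) + 1 from rfl,
      Nat.choose_succ_succ (b + 2 * a + 3) (a + 1),
      show (a + 1 : ℕ) = a + 1 from rfl,
      Nat.choose_succ_succ (b + 2 * a + 3) a]
    push_cast
    ring

lemma cCoeff_diag (j : ℕ) : cCoeff j j = 1 := by
  unfold cCoeff
  rcases Nat.eq_zero_or_pos j with h | h
  · subst h; simp
  · rw [if_neg (by omega), Nat.sub_self]
    exact catC_zero _

lemma cCoeff_rec (j k : ℕ) (hj : 1 ≤ j) (hk : j + 1 ≤ k) :
    cCoeff j k = cCoeff (j + 1) k + cCoeff (j - 1) (k - 1) := by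
  unfold cCoeff
  rw [if_neg (by omega : ¬ j = 0), if_neg (by omega : ¬ j + 1 = 0)]
  rcases eq_or_lt_of_le hj with h | h
  · -- j = 1
    have hj1 : j = 1 := h.symm
    subst hj1
    rw [if_pos (by omega : (1 : ℕ) - 1 = 0), if_neg (by omega : ¬ k - 1 = 0)]
    have h1 := catC_rec (m := k - 1) (n := k - 1) (by omega) (le_refl _)
    have h2 : catC (k - 1 - 1) (k - 1) = 0 := by
      rw [show k - 1 = (k - 1 - 1) + 1 by omega]
      exact catC_top _
    rw [show k - 1 = k - 1 from rfl] at h1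
    rw [h1, h2, show k - 1 - 1 = k - (1 + 1) by omega]
    try ring
  · -- j ≥ 2
    rw [if_neg (by omega : ¬ j - 1 = 0)]
    rw [show k - (j + 1) = k - j - 1 by omega, show k - 1 - (j - 1) = k - j by omega]
    exact catC_rec (by omega) (by omega)

lemma sum_rec (z : ℕ → ℝ) (j M : ℕ) (hj : 1 ≤ j) (hjM : j + 1 ≤ M) :
    ∑ k ∈ Finset.Icc j M, cCoeff j k * z k
      = ∑ k ∈ Finset.Icc (j + 1) M, cCoeff (j + 1) k * z k
        + ∑ k ∈ Finset.Icc (j - 1) (M - 1), cCoeff (j - 1) k * z (k + 1) := by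
  have himg : Finset.Icc j M = (Finset.Icc (j - 1) (M - 1)).image (· + 1) := by
    rw [Finset.image_add_right_Icc]
    congr 1 <;> omega
  have h3 : ∑ k ∈ Finset.Icc (j - 1) (M - 1), cCoeff (j - 1) k * z (k + 1)
      = ∑ k ∈ Finset.Icc j M, cCoeff (j - 1) (k - 1) * z k := by
    rw [himg, Finset.sum_image (fun x _ y _ h => by omega)]
    refine Finset.sum_congr rfl fun k _ => ?_
    rw [Nat.add_sub_cancel]
  rw [h3]
  have hins : Finset.Icc j M = insert j (Finset.Icc (j + 1) M) := by
    ext x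
    simp only [Finset.mem_Icc, Finset.mem_insert]
    omega
  have hnotmem : j ∉ Finset.Icc (j + 1) M := by
    simp only [Finset.mem_Icc]
    omega
  rw [hins, Finset.sum_insert hnotmem, Finset.sum_insert hnotmem]
  rw [cCoeff_diag]
  have hdiag : cCoeff (j - 1) (j - 1) = 1 := cCoeff_diag (j - 1)
  rw [hdiag]
  rw [Finset.sum_congr rfl (fun k hk => by
    rw [cCoeff_rec j k hj (Finset.mem_Icc.mp hk).1, add_mul])]
  rw [Finset.sum_add_distrib]
  ring

end TASEP

namespace TASEP

lemma rowWord_zeroth (l : List (Fin 3)) : ∀ v : ℕ → ℝ, (∀ a ∈ l, a ≠ 0) →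
    (rowWord v l) 0 = v 0 := by
  induction l with
  | nil => intro v _; rfl
  | cons a l ih =>
    intro v hl
    have ha : a ≠ 0 := hl a List.mem_cons_self
    have hrest : ∀ b ∈ l, b ≠ (0 : Fin 3) := fun b hb => hl b (List.mem_cons_of_mem a hb)
    show rowWord (rowMul v (Xmat a)) l 0 = v 0
    rw [ih (rowMul v (Xmat a)) hrest]
    fin_cases a
    · exact absurd rfl ha
    · show rowMul v X1 0 = v 0
      rw [rowMul_X1]; simp
    · show rowMul v X2 0 = v 0
      rw [rowMul_X2]; simp

lemma pairing_concat_two (v : ℕ → ℝ) (l : List (Fin 3)) (w : ℕ → ℝ) :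
    pairing v (l ++ [2]) w = (rowWord v l) 0 * w 0 := by
  unfold pairing
  rw [rowWord_append]
  have h2 : rowWord (rowWord v l) [2] = rowMul (rowWord v l) X2 := rfl
  rw [h2, rowMul_X2]
  exact (tsum_eq_single 0 (fun b hb => by simp [hb])).trans (by simp)

lemma pairing_ofFn_eq_one {L : ℕ} (α β : ℝ) (τ : Fin L → Fin 3) (hL : 0 < L)
    (hlast : τ ⟨L - 1, by omega⟩ = 2) (hnz : ∀ t, τ t ≠ 0) :
    pairing (W α) (List.ofFn τ) (V β) = 1 := by
  have hne : List.ofFn τ ≠ [] := by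
    intro h
    have := congrArg List.length h
    simp only [List.length_ofFn, List.length_nil] at this
    omega
  have hsplit : List.ofFn τ
      = (List.ofFn τ).dropLast ++ [(List.ofFn τ).getLast hne] :=
    (List.dropLast_append_getLast hne).symm
  have hgl : (List.ofFn τ).getLast hne = 2 := by
    rw [List.getLast_eq_getElem, List.getElem_ofFn]
    rw [show (⟨(List.ofFn τ).length - 1, by simp [List.length_ofFn]; omega⟩ : Fin L)
        = ⟨L - 1, by omega⟩ from Fin.ext (by simp)]
    exact hlast
  rw [hsplit, hgl, pairing_concat_two]
  have hdrop : ∀ a ∈ (List.ofFn τ).dropLast, a ≠ (0 : Fin 3) := by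
    intro a ha
    have hmem : a ∈ List.ofFn τ := List.dropLast_subset _ ha
    obtain ⟨t, ht⟩ := (List.mem_ofFn).mp hmem
    rw [← ht]; exact hnz t
  rw [rowWord_zeroth _ _ hdrop]
  show W α 0 * V β 0 = 1
  simp [W, V]

lemma Z_nn (α β : ℝ) (n : ℕ) (hn : 0 < n) : Z α β n n = 1 := by
  have hY : Y n n = {fun _ => (2 : Fin 3)} := by
    ext τ
    simp only [Finset.mem_singleton, Y, Finset.mem_filter, Finset.mem_univ, true_and]
    constructor
    · intro h
      have hcard : (Finset.univ.filter fun i => τ i = 2).card = Fintype.card (Fin n) := by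
        rw [numTwos] at h; rw [h, Fintype.card_fin]
      have huniv := Finset.eq_univ_of_card _ hcard
      funext t
      have ht : t ∈ Finset.univ.filter fun i => τ i = 2 := by
        rw [huniv]; exact Finset.mem_univ t
      exact (Finset.mem_filter.mp ht).2
    · intro h
      subst h
      rw [numTwos]
      simp [Fintype.card_fin]
  rw [Z, hY, Finset.sum_singleton]
  exact pairing_ofFn_eq_one α β _ hn rfl (fun t => by decide)

lemma Efn_base (α β : ℝ) (L n s : ℕ) (h0n : 0 < n) (hnL : n < L) (hs : s < n) :
    Efn (W α) β L n s (L - n) = 1 := by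
  set τ0 : Fin L → Fin 3 :=
    fun t => if s ≤ (t : ℕ) ∧ (t : ℕ) < s + (L - n) then 1 else 2 with hτ0
  set B : Finset (Fin L) :=
    Finset.univ.filter (fun t => s ≤ (t : ℕ) ∧ (t : ℕ) < s + (L - n)) with hB
  have hcardB : B.card = L - n := by
    rw [hB]
    rw [Finset.card_bij (fun (a : Fin L) _ => (a : ℕ))
      (t := Finset.Ico s (s + (L - n)))
      (hi := fun a ha => by
        simp only [Finset.mem_filter] at ha
        simp only [Finset.mem_Ico]
        exact ha.2)
      (i_inj := fun a ha b hb h => Fin.ext h)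
      (i_surj := fun b hb => by
        simp only [Finset.mem_Ico] at hb
        refine ⟨⟨b, by omega⟩, ?_, rfl⟩
        simp only [Finset.mem_filter]
        exact ⟨Finset.mem_univ _, hb.1, hb.2⟩)]
    rw [Nat.card_Ico]
    omega
  have hmemB : ∀ t : Fin L, t ∈ B ↔ (s ≤ (t : ℕ) ∧ (t : ℕ) < s + (L - n)) := by
    intro t; rw [hB, Finset.mem_filter]; simp
  have hτ0twos : (Finset.univ.filter fun i => τ0 i = 2) = Bᶜ := by
    ext t
    rw [Finset.mem_filter, Finset.mem_compl, hmemB]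
    constructor
    · rintro ⟨-, h2⟩ hmem
      rw [hτ0] at h2
      simp only [if_pos hmem] at h2
      exact absurd h2 (by decide)
    · intro h
      refine ⟨Finset.mem_univ _, ?_⟩
      rw [hτ0]
      simp only [if_neg h]
  have hnum0 : numTwos τ0 = n := by
    rw [numTwos, hτ0twos, Finset.card_compl, hcardB, Fintype.card_fin]
    omega
  have hfilter : (Y L n).filter
      (fun τ => ∀ t, t < L - n → ∀ h : s + t < L, τ ⟨s + t, h⟩ = 1) = {τ0} := by
    ext τ
    simp only [Finset.mem_singleton, Finset.mem_filter, Y, Finset.mem_univ, true_and]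
    constructor
    · rintro ⟨hY', hP⟩
      have hblock : ∀ t : Fin L, t ∈ B → τ t = 1 := by
        intro t ht
        rw [hmemB] at ht
        have h' : s + ((t : ℕ) - s) < L := by omega
        have := hP ((t : ℕ) - s) (by omega) h'
        rwa [show (⟨s + ((t : ℕ) - s), h'⟩ : Fin L) = t from
          Fin.ext (by show s + ((t : ℕ) - s) = (t : ℕ); omega)] at this
      have hTsub : (Finset.univ.filter fun i => τ i = 2) ⊆ Bᶜ := by
        intro t ht
        rw [Finset.mem_filter] at ht
        rw [Finset.mem_compl]
        intro hmem
        have := hblock t hmem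
        rw [this] at ht
        exact absurd ht.2 (by decide)
      have hTeq : (Finset.univ.filter fun i => τ i = 2) = Bᶜ := by
        apply Finset.eq_of_subset_of_card_le hTsub
        rw [Finset.card_compl, hcardB, Fintype.card_fin]
        have : (Finset.univ.filter fun i => τ i = 2).card = n := hY'
        omega
      funext t
      by_cases hmem : t ∈ B
      · rw [hblock t hmem]
        simp only [hτ0]
        rw [if_pos ((hmemB t).mp hmem)]
      · have : t ∈ (Finset.univ.filter fun i => τ i = 2) := by
          rw [hTeq, Finset.mem_compl]; exact hmem
        rw [(Finset.mem_filter.mp this).2]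
        simp only [hτ0]
        rw [if_neg (fun hc => hmem ((hmemB t).mpr hc))]
    · intro h
      subst h
      refine ⟨hnum0, ?_⟩
      intro t ht h'
      simp only [hτ0]
      exact if_pos ⟨show s ≤ s + t by omega, show s + t < s + (L - n) by omega⟩
  rw [Efn, hfilter, Finset.sum_singleton]
  apply pairing_ofFn_eq_one α β τ0 (by omega)
  · simp only [hτ0]
    exact if_neg (fun hc => absurd (show L - 1 < s + (L - n) from hc.2) (by omega))
  · intro t
    simp only [hτ0]
    split_ifs <;> decide

end TASEP

namespace TASEP

lemma Phi_eq_Z (α β : ℝ) (L n : ℕ) : Phi (W α) β L n = Z α β L n := rfl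

theorem auxMain (α β : ℝ) (μ : ℕ) :
    ∀ L n s j : ℕ, 2 * L - j = μ → 0 < n → n < L → s < n → j ≤ L - n →
      Efn (W α) β L n s j
        = ∑ k ∈ Finset.Icc j (L - n), cCoeff j k * Z α β (L - k) n := by
  induction μ using Nat.strong_induction_on with
  | _ μ ih =>
  intro L n s j hμ h0n hnL hs hj
  rcases Nat.eq_zero_or_pos j with rfl | hj1
  · -- j = 0
    rw [Efn_zero, Phi_eq_Z]
    rw [Finset.sum_eq_single 0
      (fun b _ hb => by simp [cCoeff, hb])
      (fun h => absurd (Finset.mem_Icc.mpr ⟨Nat.zero_le 0, Nat.zero_le _⟩) h)]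
    simp [cCoeff]
  rcases eq_or_lt_of_le hj with heq | hlt
  · -- j = L - n
    subst heq
    rw [Finset.Icc_self, Finset.sum_singleton, cCoeff_diag, one_mul,
      show L - (L - n) = n by omega, Z_nn α β n h0n]
    exact Efn_base α β L n s h0n hnL hs
  · -- 1 ≤ j < L - n
    rw [midLemma β s (W α) L n j hj1 hs (by omega)]
    rw [ih (2 * L - (j + 1)) (by omega) L n s (j + 1) rfl h0n hnL hs (by omega)]
    rw [ih (2 * (L - 1) - (j - 1)) (by omega) (L - 1) n s (j - 1) rfl h0n
      (by omega) hs (by omega)]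
    have e1 : ∑ k ∈ Finset.Icc (j - 1) (L - 1 - n), cCoeff (j - 1) k * Z α β (L - 1 - k) n
        = ∑ k ∈ Finset.Icc (j - 1) ((L - n) - 1), cCoeff (j - 1) k * Z α β (L - (k + 1)) n := by
      rw [show L - 1 - n = (L - n) - 1 by omega]
      exact Finset.sum_congr rfl fun k _ => by rw [show L - 1 - k = L - (k + 1) by omega]
    rw [e1]
    exact (sum_rec (fun k => Z α β (L - k) n) j (L - n) hj1 (by omega)).symm

lemma E_eq_Efn (α β : ℝ) (L n i j : ℕ) (hi1 : 1 ≤ i) (hij : i + j ≤ L) :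
    E α β L n 1 (fun _ => i) j = Efn (W α) β L n (i - 1) j := by
  unfold E Efn
  apply Finset.sum_congr
  · apply Finset.filter_congr
    intro τ _
    constructor
    · rintro ⟨-, h2⟩ t ht h
      have hv : val τ (i + t) = 1 := h2 0 (by simp) t (Finset.mem_range.mpr ht)
      rw [val, dif_pos ⟨by omega, by omega⟩] at hv
      rwa [show (⟨i - 1 + t, h⟩ : Fin L) = ⟨i + t - 1, by omega⟩ from
        Fin.ext (by show i - 1 + t = i + t - 1; omega)]
    · intro hP
      constructor
      · intro m hm
        have : (m : ℕ) = 0 := by omega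
        rw [this] at hm
        exact absurd rfl hm
      · intro m _ t ht
        have ht' : t < j := Finset.mem_range.mp ht
        show val τ (i + t) = 1
        rw [val, dif_pos ⟨by omega, by omega⟩]
        have := hP t ht' (by omega : i - 1 + t < L)
        rwa [show (⟨i + t - 1, by omega⟩ : Fin L) = ⟨i - 1 + t, by omega⟩ from
          Fin.ext (by show i + t - 1 = i - 1 + t; omega)]
  · intro τ _
    rfl

end TASEP

namespace TASEP

/-- explicit formula for `E₁`, Case 2: for `1 ≤ i ≤ n` and
`0 ≤ j ≤ L − n`, `E₁(L,n;i;j) = Σ_{k=j}^{L−n} c_{j,k} Z^{α,β}(L−k,n)`. -/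
theorem E1_formula_case2 (α β : ℝ)
    (hα : α ∈ Set.Ioc (0 : ℝ) 1) (hβ : β ∈ Set.Ioc (0 : ℝ) 1)
    (L n i j : ℕ) (h0n : 0 < n) (hnL : n < L)
    (hi1 : 1 ≤ i) (hin : i ≤ n) (hj : j ≤ L - n) :
    E α β L n 1 (fun _ => i) j
      = ∑ k ∈ Finset.Icc j (L - n), cCoeff j k * Z α β (L - k) n := by
  rw [E_eq_Efn α β L n i j hi1 (by omega)]
  exact auxMain α β (2 * L - j) L n (i - 1) j rfl h0n hnL (by omega) hj

end TASEP
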